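/- Let c: [0,1] → ℝ be twice continuously differentiable, strictly increasing, convex, with c(0) = 0, and set u(a) = -c(1-a). For the optimal interior cutoff equation 2u'(2t)(t - s) = u(2t) - u(0), with t = E[θ|θ ≥ s], the solution in the quadratic case c(x) = x² with θ uniform on [θ̲, θ̄] (so t = (s+θ̄)/2) has unique negative root s = κ(θ̄) = -θ̄²/(2 - θ̄ + 2√(1 - θ̄ + θ̄²)). -/

import Mathlib

open Set

/-- In the quadratic case `c(x) = x²` (`u(a) = -(1-a)²`) with `θ` uniform on `[θ̲,θ̄]`
(so `t = E[θ|θ≥s] = (s+θ̄)/2`), the cutoff equation `2u'(2t)(t-s) = u(2t) - u(0)` has a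
unique negative root, namely `s = κ(θ̄) = -θ̄²/(2 - θ̄ + 2√(1 - θ̄ + θ̄²))`. -/
theorem cutoff_equation_unique_negative_root
    (θh : ℝ) (h1 : 0 < θh) (h2 : θh ≤ 1) :
    (-θh ^ 2 / (2 - θh + 2 * Real.sqrt (1 - θh + θh ^ 2)) < 0) ∧
      ∀ s : ℝ, s < 0 →
        ((2 * deriv (fun a : ℝ => -(1 - a) ^ 2) (2 * ((s + θh) / 2)) *
              ((s + θh) / 2 - s) =
            (fun a : ℝ => -(1 - a) ^ 2) (2 * ((s + θh) / 2)) -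
              (fun a : ℝ => -(1 - a) ^ 2) 0) ↔
          s = -θh ^ 2 / (2 - θh + 2 * Real.sqrt (1 - θh + θh ^ 2))) := by
  set R := Real.sqrt (1 - θh + θh ^ 2) with hRdef
  have hrad : 0 < 1 - θh + θh ^ 2 := by nlinarith
  have hR2 : R ^ 2 = 1 - θh + θh ^ 2 := Real.sq_sqrt hrad.le
  have hRpos : 0 < R := Real.sqrt_pos.mpr hrad
  have hD : 0 < 2 - θh + 2 * R := by linarith
  have hκ : -θh ^ 2 / (2 - θh + 2 * R) = ((2 - θh) - 2 * R) / 3 := by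
    rw [div_eq_div_iff hD.ne' (by norm_num)]
    linear_combination (4 : ℝ) * hR2
  have hderiv : ∀ x : ℝ, deriv (fun a : ℝ => -(1 - a) ^ 2) x = 2 * (1 - x) := by
    intro x
    have h : HasDerivAt (fun a : ℝ => -(1 - a) ^ 2)
        (-((2 : ℕ) * (1 - x) ^ (2 - 1) * (-1))) x := by
      exact (((hasDerivAt_id x).const_sub 1).pow 2).neg
    have := h.deriv
    rw [this]; ring
  constructor
  · exact div_neg_of_neg_of_pos (by nlinarith) hD
  · intro s hs
    rw [hderiv]
    simp only
    constructor
    · intro h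
      have hpoly : 3 * s ^ 2 + 2 * s * (θh - 2) - θh ^ 2 = 0 := by
        linear_combination h
      have hfac : (s - ((2 - θh) - 2 * R) / 3) * (3 * s - (2 - θh + 2 * R)) = 0 := by
        linear_combination hpoly - (4 / 3 : ℝ) * hR2
      rcases mul_eq_zero.mp hfac with h' | h'
      · rw [hκ]; linarith
      · exfalso; nlinarith
    · intro h
      rw [h, hκ]
      field_simp
      linear_combination (12 : ℝ) * hR2
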